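/- arXiv:1811.06829 — 2 statements merged into one kernel-verified Lean document; each statement's English description precedes it below -/
import Mathlib

section
/- Under conditions: q odd prime power, m > 3, 2 ≤ k ≤ m-2, and q^m - 1 - Σ_{i=1}^{m-1} C(m-1,i)(q-1)^i - Σ_{i=1}^{k} C(m-1,i)(q-1)^i ≥ Σ_{i=1}^{k} C(m,i)(q-1)^i, the minimum nonzero Hamming weight of the code C_f equals Σ_{i=1}^{k} C(m,i)(q-1)^i and the maximum Hamming weight is at least q^m - q^{m-1}. -/
/-- The function f of the paper: f(x) = α_{w(x)} if w(x) ≤ k, and 0 otherwise,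
where w(x) is the number of nonzero coordinates of x. -/
def fDH {F : Type*} [Field F] [DecidableEq F] {m : ℕ} (k : ℕ) (α : ℕ → F)
    (x : Fin m → F) : F :=
  if (Finset.univ.filter fun j => x j ≠ 0).card ≤ k then
    α ((Finset.univ.filter fun j => x j ≠ 0).card)
  else 0

/-!
For `u = 0` the codeword is the indicator of `v ⬝ᵥ x ≠ 0`, of weight `q^m - q^(m-1)`; for `v = 0`
it is supported exactly on the `S = ∑_{i=1}^k C(m,i)(q-1)^i` nonzero vectors of weight at most `k`.
Otherwise a zero of weight `> k` lies on the hyperplane `v ⬝ᵥ x = 0`, while a zero `x` of weight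
in `[1, k]` has `v ⬝ᵥ x = -u α_{w(x)} ≠ 0`, so its `q - 1` nonzero multiples are distinct vectors
of the same weight off the hyperplane, of which `x` is the only zero. The hyperplane contains at
least `∑_{i=1}^{k-1} C(m-1,i)(q-1)^i` vectors of weight in `[1, k]` (extend any vector of `F^(m-1)`
by the coordinate that `v` forces), and Pascal's rule together with Condition (1) then leaves at
least `S` nonzero coordinates.
-/

open Finset Matrix

section HammingWeight

variable {ι β : Type*} [Fintype ι] [DecidableEq ι] [Zero β] [DecidableEq β]

lemma card_filter_support_eq [Fintype β] (T : Finset ι) :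
    #{x : ι → β | ({i | x i ≠ 0} : Finset ι) = T} = (Fintype.card β - 1) ^ #T := by
  have hpi : ({x : ι → β | ({i | x i ≠ 0} : Finset ι) = T} : Finset _) =
      Fintype.piFinset fun i => if i ∈ T then univ.erase 0 else {0} := by
    ext x
    simp only [mem_filter, mem_univ, true_and, Fintype.mem_piFinset, Finset.ext_iff]
    refine forall_congr' fun i => ?_
    split_ifs with h <;> simp [h]
  simp [hpi, apply_ite, prod_ite_mem, card_erase_of_mem]

lemma card_hammingNorm_eq [Fintype β] (i : ℕ) :
    #{x : ι → β | hammingNorm x = i} = (Fintype.card ι).choose i * (Fintype.card β - 1) ^ i := by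
  rw [card_eq_sum_card_fiberwise (f := fun x : ι → β => ({i | x i ≠ 0} : Finset ι))
    (t := powersetCard i univ) (fun x hx => by simpa [hammingNorm] using hx)]
  rw [sum_congr rfl fun T hT => ?_, sum_const, card_powersetCard, card_univ, smul_eq_mul]
  rw [mem_powersetCard] at hT
  rw [filter_filter, ← hT.2, ← card_filter_support_eq]
  congr 1
  exact filter_congr fun x _ => ⟨fun h => h.2, fun h => ⟨by rw [hammingNorm, h], h⟩⟩

lemma card_hammingNorm_mem [Fintype β] (s : Finset ℕ) :
    #{x : ι → β | hammingNorm x ∈ s} =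
      ∑ i ∈ s, (Fintype.card ι).choose i * (Fintype.card β - 1) ^ i := by
  rw [card_eq_sum_card_fiberwise (f := hammingNorm) (t := s) (fun x hx => by simpa using hx)]
  refine sum_congr rfl fun i hi => ?_
  rw [filter_filter, ← card_hammingNorm_eq]
  congr 1
  exact filter_congr fun x _ => ⟨fun h => h.2, fun h => ⟨h ▸ hi, h⟩⟩

lemma hammingNorm_subtype_ne (x : ι → β) (j : ι) :
    hammingNorm (fun t : {t // t ≠ j} => x t) = #(({i | x i ≠ 0} : Finset ι).erase j) :=
  card_bij (fun t _ => t.1) (fun t ht => mem_erase.2 ⟨t.2, by simpa using ht⟩)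
    (fun _ _ _ _ => Subtype.ext) fun i hi => by
    simp only [mem_erase, mem_filter, mem_univ, true_and] at hi
    exact ⟨⟨i, hi.1⟩, by simpa using hi.2, rfl⟩

lemma hammingNorm_subtype_ne_le (x : ι → β) (j : ι) :
    hammingNorm (fun t : {t // t ≠ j} => x t) ≤ hammingNorm x := by
  rw [hammingNorm_subtype_ne]
  exact card_erase_le

lemma hammingNorm_le_hammingNorm_subtype_ne_add_one (x : ι → β) (j : ι) :
    hammingNorm x ≤ hammingNorm (fun t : {t // t ≠ j} => x t) + 1 := by
  rw [hammingNorm_subtype_ne]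
  have := pred_card_le_card_erase (s := ({i | x i ≠ 0} : Finset ι)) (a := j)
  rw [hammingNorm]
  omega

end HammingWeight

section DotProduct

variable {ι F : Type*} [Fintype ι] [DecidableEq ι] [Field F]

def extendKer (v : ι → F) (j : ι) (y : {t // t ≠ j} → F) : ι → F :=
  fun t => if h : t = j then -(v j)⁻¹ * ∑ s : {t // t ≠ j}, v s * y s else y ⟨t, h⟩

lemma extendKer_coe (v : ι → F) (j : ι) (y : {t // t ≠ j} → F) (s : {t // t ≠ j}) :
    extendKer v j y s = y s :=
  dif_neg s.2

lemma dotProduct_extendKer {v : ι → F} {j : ι} (hvj : v j ≠ 0) (y : {t // t ≠ j} → F) :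
    v ⬝ᵥ extendKer v j y = 0 := by
  rw [dotProduct, Fintype.sum_eq_add_sum_subtype_ne _ j]
  simp only [extendKer_coe]
  rw [extendKer, dif_pos rfl]
  field_simp
  ring

variable [DecidableEq F] [Fintype F]

lemma card_hammingNorm_mem_Icc_le_card_ker {v : ι → F} {j : ι} (hvj : v j ≠ 0) (k : ℕ) :
    #{y : {t // t ≠ j} → F | hammingNorm y ∈ Icc 1 k} ≤
      #{x : ι → F | hammingNorm x ∈ Icc 1 (k + 1) ∧ v ⬝ᵥ x = 0} := by
  have hrestrict (y) : (fun t : {t // t ≠ j} => extendKer v j y t) = y :=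
    funext (extendKer_coe v j y)
  refine card_le_card_of_injOn (extendKer v j) (fun y hy => ?_) fun y _ y' _ h => ?_
  · simp only [mem_coe, mem_filter, mem_univ, true_and, mem_Icc] at hy ⊢
    have h₁ := hammingNorm_subtype_ne_le (extendKer v j y) j
    have h₂ := hammingNorm_le_hammingNorm_subtype_ne_add_one (extendKer v j y) j
    rw [hrestrict] at h₁ h₂
    exact ⟨⟨by omega, by omega⟩, dotProduct_extendKer hvj y⟩
  · rw [← hrestrict y, ← hrestrict y', h]

lemma card_dotProduct_ne_zero_eq_add (v : ι → F) (k : ℕ) :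
    #{x : ι → F | v ⬝ᵥ x ≠ 0} = #{x : ι → F | hammingNorm x ∈ Icc 1 k ∧ v ⬝ᵥ x ≠ 0} +
      #{x : ι → F | k < hammingNorm x ∧ v ⬝ᵥ x ≠ 0} := by
  rw [eq_comm, ← card_filter_add_card_filter_not (s := {x : ι → F | v ⬝ᵥ x ≠ 0})
    (fun x => hammingNorm x ≤ k), filter_filter, filter_filter]
  have hpos (x : ι → F) (h : v ⬝ᵥ x ≠ 0) : 0 < hammingNorm x :=
    hammingNorm_pos_iff.2 fun hx => h (hx ▸ dotProduct_zero v)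
  congr 1 <;> congr 1 <;> ext x <;> simp only [mem_filter, mem_univ, true_and, mem_Icc, not_le]
  · exact ⟨fun h => ⟨h.2, h.1.2⟩, fun h => ⟨⟨hpos x h.1, h.2⟩, h.1⟩⟩
  · exact and_comm

lemma card_dotProduct_eq_zero {v : ι → F} (hv : v ≠ 0) :
    #{x : ι → F | v ⬝ᵥ x = 0} = Fintype.card F ^ (Fintype.card ι - 1) := by
  set f := dotProductEquiv F ι v
  have hf : f ≠ 0 := by simpa [f] using hv
  have hrank := Module.Dual.finrank_ker_add_one_of_ne_zero hf
  rw [Module.finrank_fintype_fun_eq_card] at hrank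
  rw [← hrank, Nat.add_sub_cancel, ← Nat.card_eq_fintype_card, ← Module.natCard_eq_pow_finrank,
    ← Fintype.card_subtype, ← Nat.card_eq_fintype_card]
  rfl

lemma card_dotProduct_ne_zero {v : ι → F} (hv : v ≠ 0) :
    #{x : ι → F | v ⬝ᵥ x ≠ 0} =
      Fintype.card F ^ Fintype.card ι - Fintype.card F ^ (Fintype.card ι - 1) := by
  have := card_filter_add_card_filter_not (s := univ) (fun x : ι → F => v ⬝ᵥ x = 0)
  rw [card_univ, Fintype.card_fun, card_dotProduct_eq_zero hv] at this
  simp only [← ne_eq] at this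
  omega

lemma card_dotProduct_eq_mul_le (v : ι → F) (I : Finset ℕ) (g : ℕ → F)
    (hg : ∀ i ∈ I, g i ≠ 0) :
    #{x : ι → F | hammingNorm x ∈ I ∧ v ⬝ᵥ x = g (hammingNorm x)} * (Fintype.card F - 1) ≤
      #{x : ι → F | hammingNorm x ∈ I ∧ v ⬝ᵥ x ≠ 0} := by
  rw [← card_univ, ← card_erase_of_mem (mem_univ 0), ← card_product]
  have hnorm (a : F) (ha : a ≠ 0) (x : ι → F) : hammingNorm (a • x) = hammingNorm x :=
    hammingNorm_smul (fun _ => smul_right_injective F ha) x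
  refine card_le_card_of_injOn (fun p => p.2 • p.1) (fun p hp => ?_) fun p hp p' hp' h => ?_
  · simp only [coe_product, coe_filter, mem_univ, true_and, Set.mem_prod, Set.mem_ofPred_eq,
      coe_erase, coe_univ, Set.mem_sdiff, Set.mem_univ, Set.mem_singleton_iff] at hp ⊢
    obtain ⟨⟨hI, hv⟩, ha⟩ := hp
    rw [hnorm _ ha, dotProduct_smul, hv, smul_eq_mul]
    exact ⟨hI, mul_ne_zero ha (hg _ hI)⟩
  · simp only [coe_product, coe_filter, mem_univ, true_and, Set.mem_prod, Set.mem_ofPred_eq,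
      coe_erase, coe_univ, Set.mem_sdiff, Set.mem_univ, Set.mem_singleton_iff] at hp hp' h
    obtain ⟨⟨hI, hv⟩, ha⟩ := hp
    obtain ⟨⟨-, hv'⟩, ha'⟩ := hp'
    have hw : hammingNorm p.1 = hammingNorm p'.1 := by
      rw [← hnorm _ ha p.1, h, hnorm _ ha']
    have hscal : p.2 * g (hammingNorm p.1) = p'.2 * g (hammingNorm p.1) := calc
      _ = v ⬝ᵥ (p.2 • p.1) := by rw [dotProduct_smul, hv, smul_eq_mul]
      _ = v ⬝ᵥ (p'.2 • p'.1) := by rw [h]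
      _ = _ := by rw [dotProduct_smul, hv', hw, smul_eq_mul]
    have h2 : p.2 = p'.2 := mul_right_cancel₀ (hg _ hI) hscal
    refine Prod.ext ?_ h2
    rw [h2] at h
    exact smul_right_injective _ ha' h

end DotProduct

section PuncturedBall

def punctBallCard (n r k : ℕ) : ℕ := ∑ i ∈ Icc 1 k, n.choose i * r ^ i

lemma punctBallCard_succ_succ (n r k : ℕ) :
    punctBallCard (n + 1) r (k + 1) =
      punctBallCard n r (k + 1) + r + r * punctBallCard n r k := by
  induction k with
  | zero => simp [punctBallCard, Nat.choose_succ_succ]; ring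
  | succ k ih =>
    simp only [punctBallCard] at ih ⊢
    rw [sum_Icc_succ_top (by omega), ih,
      sum_Icc_succ_top (by omega : 1 ≤ k + 2) (fun i => n.choose i * r ^ i),
      sum_Icc_succ_top (by omega : 1 ≤ k + 1) (fun i => n.choose i * r ^ i), Nat.choose_succ_succ]
    ring

lemma one_add_punctBallCard_self (n r : ℕ) : 1 + punctBallCard n r n = (r + 1) ^ n := by
  rw [punctBallCard, add_pow, ← Nat.Ico_zero_eq_range, sum_eq_sum_Ico_succ_bot (by omega),
    Ico_add_one_right_eq_Icc]
  simp [mul_comm]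

lemma le_punctBallCard {n k : ℕ} (r : ℕ) (hn : 1 ≤ n) (hk : 1 ≤ k) :
    r ≤ punctBallCard n r k := calc
  r ≤ n.choose 1 * r ^ 1 := by
    rw [Nat.choose_one_right, pow_one]; exact Nat.le_mul_of_pos_left r hn
  _ ≤ punctBallCard n r k :=
    single_le_sum (f := fun i => n.choose i * r ^ i) (by simp) (by simp [hk])

lemma card_hammingNorm_mem_Icc {ι β : Type*} [Fintype ι] [DecidableEq ι] [Zero β] [Fintype β]
    [DecidableEq β] (k : ℕ) :
    #{x : ι → β | hammingNorm x ∈ Icc 1 k} =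
      punctBallCard (Fintype.card ι) (Fintype.card β - 1) k :=
  card_hammingNorm_mem _

end PuncturedBall

section Code

variable {F : Type*} [Field F] [Fintype F] [DecidableEq F] {m k : ℕ} {α : ℕ → F}

def codewordWeight (k : ℕ) (α : ℕ → F) (u : F) (v : Fin m → F) : ℕ :=
  #{x : Fin m → F | x ≠ 0 ∧ u * fDH k α x + v ⬝ᵥ x ≠ 0}

omit [Fintype F] in
lemma fDH_eq (x : Fin m → F) :
    fDH k α x = if hammingNorm x ≤ k then α (hammingNorm x) else 0 :=
  rfl

lemma codewordWeight_eq_add (u : F) (v : Fin m → F) :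
    codewordWeight k α u v =
      #{x : Fin m → F | hammingNorm x ∈ Icc 1 k ∧ v ⬝ᵥ x ≠ -(u * α (hammingNorm x))} +
        #{x : Fin m → F | k < hammingNorm x ∧ v ⬝ᵥ x ≠ 0} := by
  rw [codewordWeight, ← card_union_of_disjoint (disjoint_filter.2 fun x _ h₁ h₂ => by
    rw [mem_Icc] at h₁; omega)]
  congr 1
  ext x
  simp only [mem_filter, mem_univ, true_and, mem_union, mem_Icc, ← hammingNorm_pos_iff, fDH_eq]
  split_ifs with h
  · have : ¬ k < hammingNorm x := not_lt.2 h
    grind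
  · grind

lemma ncard_setOf_eq_codewordWeight (u : F) (v : Fin m → F) :
    Set.ncard {x : Fin m → F | x ≠ 0 ∧ u * fDH k α x + ∑ j, v j * x j ≠ 0} =
      codewordWeight k α u v := by
  rw [Set.ncard_eq_toFinset_card', Set.toFinset_ofPred]
  rfl

lemma codewordWeight_zero_right {u : F} (hu : u ≠ 0) (hα : ∀ i, 1 ≤ i → i ≤ k → α i ≠ 0) :
    codewordWeight k α u (0 : Fin m → F) = punctBallCard m (Fintype.card F - 1) k := by
  have hcount := card_hammingNorm_mem_Icc (ι := Fin m) (β := F) k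
  rw [Fintype.card_fin] at hcount
  rw [codewordWeight_eq_add, ← hcount]
  simp only [zero_dotProduct, ne_eq, not_true_eq_false, and_false, filter_false, card_empty,
    add_zero]
  refine congrArg card (filter_congr fun x _ => and_iff_left_of_imp fun hx => ?_)
  rw [mem_Icc] at hx
  exact (neg_ne_zero.2 (mul_ne_zero hu (hα _ hx.1 hx.2))).symm

lemma codewordWeight_zero_left {v : Fin m → F} (hv : v ≠ 0) :
    codewordWeight k α 0 v = Fintype.card F ^ m - Fintype.card F ^ (m - 1) := by
  rw [codewordWeight_eq_add]
  simp only [zero_mul, neg_zero]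
  rw [← card_dotProduct_ne_zero_eq_add, card_dotProduct_ne_zero hv, Fintype.card_fin]

lemma le_codewordWeight {u : F} {v : Fin m → F} (hu : u ≠ 0) (hv : v ≠ 0) (hm : 2 ≤ m)
    (hk : 2 ≤ k) (hα : ∀ i, 1 ≤ i → i ≤ k → α i ≠ 0)
    (hcond : punctBallCard m (Fintype.card F - 1) k +
      punctBallCard (m - 1) (Fintype.card F - 1) k + Fintype.card F ^ (m - 1) ≤
        Fintype.card F ^ m) :
    punctBallCard m (Fintype.card F - 1) k ≤ codewordWeight k α u v := by
  obtain ⟨j, hvj⟩ : ∃ j, v j ≠ 0 := Function.ne_iff.1 hv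
  obtain ⟨n, rfl⟩ : ∃ n, m = n + 1 := ⟨m - 1, by omega⟩
  obtain ⟨l, rfl⟩ : ∃ l, k = l + 1 := ⟨k - 1, by omega⟩
  have hg : ∀ i ∈ Icc 1 (l + 1), -(u * α i) ≠ 0 := fun i hi =>
    neg_ne_zero.2 (mul_ne_zero hu (hα i (mem_Icc.1 hi).1 (mem_Icc.1 hi).2))
  have hscale := card_dotProduct_eq_mul_le v _ _ hg
  have hext := card_hammingNorm_mem_Icc_le_card_ker hvj l
  rw [card_hammingNorm_mem_Icc, Fintype.card_subtype_compl, Fintype.card_subtype_eq] at hext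
  have hhigh := card_dotProduct_ne_zero_eq_add v (l + 1)
  rw [card_dotProduct_ne_zero hv] at hhigh
  have hlow := card_filter_add_card_filter_not
    (s := {x : Fin (n + 1) → F | hammingNorm x ∈ Icc 1 (l + 1)})
    (fun x => v ⬝ᵥ x = -(u * α (hammingNorm x)))
  have hker := card_filter_add_card_filter_not
    (s := {x : Fin (n + 1) → F | hammingNorm x ∈ Icc 1 (l + 1)}) (fun x => v ⬝ᵥ x = 0)
  simp only [filter_filter, card_hammingNorm_mem_Icc, ← ne_eq] at hlow hker
  obtain ⟨r, hq⟩ : ∃ r, Fintype.card F = r + 1 := Nat.exists_eq_add_one.2 Fintype.card_pos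
  have hr : 1 ≤ r := by have := Fintype.one_lt_card (α := F); omega
  simp only [hq, Fintype.card_fin, Nat.add_sub_cancel] at hlow hker hext hhigh hcond hscale ⊢
  rw [codewordWeight_eq_add]
  set H := #{x : Fin (n + 1) → F | hammingNorm x ∈ Icc 1 (l + 1) ∧ v ⬝ᵥ x = 0}
  set Z := #{x : Fin (n + 1) → F |
    hammingNorm x ∈ Icc 1 (l + 1) ∧ v ⬝ᵥ x = -(u * α (hammingNorm x))}
  have hpascal := punctBallCard_succ_succ n r l
  have hT := le_punctBallCard r (n := n) (k := l) (by omega) (by omega)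
  -- The `r` nonzero multiples of a low-weight zero lie off the hyperplane, so `r * Z ≤ S - H`;
  -- expand `S` by Pascal's rule and use `r ≤ punctBallCard n r l ≤ H`.
  have hZ : Z ≤ H + punctBallCard n r (l + 1) := by
    nlinarith [Nat.mul_le_mul_left r hext, Nat.le_mul_of_pos_left (punctBallCard n r (l + 1)) hr]
  omega

end Code

theorem stmt9_general {F : Type*} [Field F] [Fintype F] [DecidableEq F] (q m k : ℕ)
    (hq : Fintype.card F = q) (hm : 3 < m) (hk1 : 2 ≤ k)
    (α : ℕ → F) (hα : ∀ i, 1 ≤ i → i ≤ k → α i ≠ 0)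
    (hcond : ∑ i ∈ Finset.Icc 1 k, m.choose i * (q - 1) ^ i ≤
      q ^ m - 1 - ∑ i ∈ Finset.Icc 1 (m - 1), (m - 1).choose i * (q - 1) ^ i -
        ∑ i ∈ Finset.Icc 1 k, (m - 1).choose i * (q - 1) ^ i) :
    (∀ (u : F) (v : Fin m → F), ¬(u = 0 ∧ v = 0) →
      ∑ i ∈ Finset.Icc 1 k, m.choose i * (q - 1) ^ i ≤
        Set.ncard {x : Fin m → F | x ≠ 0 ∧ u * fDH k α x + ∑ j, v j * x j ≠ 0}) ∧
    (∃ (u : F) (v : Fin m → F), ¬(u = 0 ∧ v = 0) ∧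
      Set.ncard {x : Fin m → F | x ≠ 0 ∧ u * fDH k α x + ∑ j, v j * x j ≠ 0} =
        ∑ i ∈ Finset.Icc 1 k, m.choose i * (q - 1) ^ i) ∧
    (∃ (u : F) (v : Fin m → F),
      q ^ m - q ^ (m - 1) ≤
        Set.ncard {x : Fin m → F | x ≠ 0 ∧ u * fDH k α x + ∑ j, v j * x j ≠ 0}) := by
  subst hq
  simp only [ncard_setOf_eq_codewordWeight, ← punctBallCard.eq_1] at hcond ⊢
  have hr : 1 ≤ Fintype.card F - 1 := by have := Fintype.one_lt_card (α := F); omega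
  -- `hpos` excludes truncation in the natural-number subtractions of `hcond`.
  have hpos := le_punctBallCard (Fintype.card F - 1) (n := m) (k := k) (by omega) (by omega)
  have hbinom := one_add_punctBallCard_self (m - 1) (Fintype.card F - 1)
  rw [Nat.sub_add_cancel (by omega)] at hbinom
  have hcond' : punctBallCard m (Fintype.card F - 1) k +
      punctBallCard (m - 1) (Fintype.card F - 1) k + Fintype.card F ^ (m - 1) ≤
        Fintype.card F ^ m := by
    omega
  have hsingle : (Pi.single ⟨0, by omega⟩ 1 : Fin m → F) ≠ 0 := by simp
  refine ⟨fun u v huv => ?_, ⟨1, 0, by simp, codewordWeight_zero_right one_ne_zero hα⟩,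
    ⟨0, _, (codewordWeight_zero_left hsingle).ge⟩⟩
  by_cases hu : u = 0
  · subst hu
    rw [codewordWeight_zero_left (by simpa using huv)]
    omega
  by_cases hv : v = 0
  · subst hv
    exact (codewordWeight_zero_right hu hα).ge
  exact le_codewordWeight hu hv (by omega) hk1 hα hcond'

/-- Under Condition (1), the minimum nonzero weight of C_f equals
Σ_{i=1}^{k} C(m,i)(q-1)^i and the maximum weight is at least q^m - q^(m-1). -/
theorem stmt9 {F : Type*} [Field F] [Fintype F] [DecidableEq F] (q m k : ℕ)
    (hq : Fintype.card F = q) (hodd : Odd q) (hm : 3 < m) (hk1 : 2 ≤ k) (hk2 : k ≤ m - 2)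
    (α : ℕ → F) (hα : ∀ i, 1 ≤ i → i ≤ k → α i ≠ 0)
    (hcond : ∑ i ∈ Finset.Icc 1 k, m.choose i * (q - 1) ^ i ≤
      q ^ m - 1 - ∑ i ∈ Finset.Icc 1 (m - 1), (m - 1).choose i * (q - 1) ^ i -
        ∑ i ∈ Finset.Icc 1 k, (m - 1).choose i * (q - 1) ^ i) :
    (∀ (u : F) (v : Fin m → F), ¬(u = 0 ∧ v = 0) →
      ∑ i ∈ Finset.Icc 1 k, m.choose i * (q - 1) ^ i ≤
        Set.ncard {x : Fin m → F | x ≠ 0 ∧ u * fDH k α x + ∑ j, v j * x j ≠ 0}) ∧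
    (∃ (u : F) (v : Fin m → F), ¬(u = 0 ∧ v = 0) ∧
      Set.ncard {x : Fin m → F | x ≠ 0 ∧ u * fDH k α x + ∑ j, v j * x j ≠ 0} =
        ∑ i ∈ Finset.Icc 1 k, m.choose i * (q - 1) ^ i) ∧
    (∃ (u : F) (v : Fin m → F),
      q ^ m - q ^ (m - 1) ≤
        Set.ncard {x : Fin m → F | x ≠ 0 ∧ u * fDH k α x + ∑ j, v j * x j ≠ 0}) :=
  stmt9_general q m k hq hm hk1 α hα hcond
end

section
/- Let q be an odd prime power, m > 3, 2 ≤ k ≤ m-2, α_1,...,α_k ∈ F_q^*. The code C_f is minimal: for any two nonzero codewords c, c' ∈ C_f, if the support of c' is contained in the support of c, then c' = λc for some λ ∈ F_q^*. -/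
set_option linter.unusedSectionVars false
set_option linter.unusedVariables false

section aux
variable {F : Type*} [Field F] [DecidableEq F] {m : ℕ}

def esgl (i : Fin m) (t : F) : Fin m → F := Pi.single i t

lemma esgl_apply (i j : Fin m) (t : F) : esgl i t j = if j = i then t else 0 := by
  simp [esgl, Pi.single_apply]

lemma esgl_ne_zero (i : Fin m) {t : F} (ht : t ≠ 0) : esgl i t ≠ 0 := by
  intro h
  have := congrFun h i
  simp [esgl_apply, ht] at this

lemma pair_ne_zero {i j : Fin m} (hij : i ≠ j) (s : F) {t : F} (ht : t ≠ 0) :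
    esgl i s + esgl j t ≠ 0 := by
  intro h
  have := congrFun h j
  simp [esgl_apply, Ne.symm hij] at this
  exact ht this

lemma wt_single (i : Fin m) (t : F) (ht : t ≠ 0) :
    (Finset.univ.filter fun j => esgl i t j ≠ 0).card = 1 := by
  have : (Finset.univ.filter fun j => esgl i t j ≠ 0) = {i} := by
    ext j
    by_cases h : j = i <;> simp [esgl_apply, h, ht]
  rw [this, Finset.card_singleton]

lemma wt_pair {i j : Fin m} (hij : i ≠ j) {s t : F} (hs : s ≠ 0) (ht : t ≠ 0) :
    (Finset.univ.filter fun l => (esgl i s + esgl j t) l ≠ 0).card = 2 := by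
  have : (Finset.univ.filter fun l => (esgl i s + esgl j t) l ≠ 0) = {i, j} := by
    ext l
    rcases eq_or_ne l i with h | h <;> rcases eq_or_ne l j with h' | h' <;>
      simp [esgl_apply, h, h', hs, ht, hij, Ne.symm hij]
  rw [this, Finset.card_pair hij]

lemma sum_single (v : Fin m → F) (i : Fin m) (t : F) :
    ∑ j, v j * esgl i t j = v i * t := by
  simp [esgl_apply, mul_ite, Finset.sum_ite_eq']

lemma sum_pair (v : Fin m → F) {i j : Fin m} (hij : i ≠ j) (s t : F) :
    ∑ l, v l * (esgl i s + esgl j t) l = v i * s + v j * t := by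
  simp only [Pi.add_apply, mul_add, Finset.sum_add_distrib, sum_single]

/-- fDH at a vector of weight w ≤ k -/
lemma fDH_eval (k : ℕ) (α : ℕ → F) (x : Fin m → F) (w : ℕ)
    (hw : (Finset.univ.filter fun j => x j ≠ 0).card = w) (hwk : w ≤ k) :
    fDH k α x = α w := by
  rw [fDH, hw, if_pos hwk]

lemma fDH_eval_high (k : ℕ) (α : ℕ → F) (x : Fin m → F)
    (hwk : k < (Finset.univ.filter fun j => x j ≠ 0).card) :
    fDH k α x = 0 := by
  rw [fDH, if_neg (by omega)]

lemma fDH_two_smul (k : ℕ) (α : ℕ → F) (x : Fin m → F) (h2 : (2:F) ≠ 0) :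
    fDH k α (fun j => 2 * x j) = fDH k α x := by
  have : (Finset.univ.filter fun j => 2 * x j ≠ 0) = (Finset.univ.filter fun j => x j ≠ 0) := by
    ext j; simp [mul_ne_zero_iff, h2]
  rw [fDH, fDH, this]

def allo (m : ℕ) (F : Type*) [One F] : Fin m → F := fun _ => 1

def aplus (F : Type*) [Field F] [DecidableEq F] {m : ℕ} (i : Fin m) : Fin m → F := fun j => 1 + esgl i 1 j

lemma wt_allones :
    (Finset.univ.filter fun j => allo m F j ≠ 0).card = m := by
  simp [allo]

lemma wt_allones_plus (i : Fin m) (h2 : (2:F) ≠ 0) :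
    (Finset.univ.filter fun j => aplus F i j ≠ 0).card = m := by
  have : (Finset.univ.filter fun j => aplus F i j ≠ 0) = Finset.univ := by
    ext j
    rcases eq_or_ne j i with h | h <;>
      simp [aplus, esgl_apply, h, h2, one_add_one_eq_two]
  rw [this, Finset.card_univ, Fintype.card_fin]

lemma sum_allones (v : Fin m → F) : ∑ j, v j * allo m F j = ∑ j, v j := by
  simp [allo]

lemma sum_aplus (v : Fin m → F) (i : Fin m) :
    ∑ j, v j * aplus F i j = (∑ j, v j) + v i := by
  simp only [aplus, mul_add, Finset.sum_add_distrib, sum_single, mul_one]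

lemma allo_ne_zero (hm : 0 < m) (h1 : (1:F) ≠ 0) : allo m F ≠ 0 := by
  intro h
  have := congrFun h ⟨0, hm⟩
  simp [allo] at this

lemma aplus_ne_zero (i : Fin m) (h2 : (2:F) ≠ 0) : aplus F i ≠ 0 := by
  intro h
  have := congrFun h i
  simp [aplus, esgl_apply, one_add_one_eq_two] at this
  exact h2 this
end aux

/-- The code C_f is minimal: for any two nonzero codewords c(u,v) and
c(u',v'), if the support of c(u',v') is contained in that of c(u,v), then
c(u',v') = λ · c(u,v) for some nonzero scalar λ. -/
theorem stmt15 {F : Type*} [Field F] [Fintype F] [DecidableEq F] (q m k : ℕ)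
    (hq : Fintype.card F = q) (hodd : Odd q) (hm : 3 < m) (hk1 : 2 ≤ k) (hk2 : k ≤ m - 2)
    (α : ℕ → F) (hα : ∀ i, 1 ≤ i → i ≤ k → α i ≠ 0) :
    ∀ (u u' : F) (v v' : Fin m → F),
      (fun x : {x : Fin m → F // x ≠ 0} => u * fDH k α x.val + ∑ j, v j * x.val j) ≠ 0 →
      (fun x : {x : Fin m → F // x ≠ 0} => u' * fDH k α x.val + ∑ j, v' j * x.val j) ≠ 0 →
      (∀ x : {x : Fin m → F // x ≠ 0},
        u' * fDH k α x.val + ∑ j, v' j * x.val j ≠ 0 →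
          u * fDH k α x.val + ∑ j, v j * x.val j ≠ 0) →
      ∃ lam : F, lam ≠ 0 ∧ ∀ x : {x : Fin m → F // x ≠ 0},
        u' * fDH k α x.val + ∑ j, v' j * x.val j =
          lam * (u * fDH k α x.val + ∑ j, v j * x.val j) := by
  have h2 : (2:F) ≠ 0 := by
    intro h
    have hd : ringChar F ∣ 2 := ringChar.dvd (by exact_mod_cast h)
    have hp : (ringChar F).Prime := CharP.char_is_prime F _
    have h2' : ringChar F = 2 := (Nat.prime_dvd_prime_iff_eq hp Nat.prime_two).mp hd
    have heven := FiniteField.even_card_of_char_two h2'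
    rw [hq] at heven
    rw [Nat.odd_iff] at hodd
    omega
  intro u u' v v' hc hc' hsupp
  have hmpos : 0 < m := by omega
  have hkm : k < m := by omega
  have hk1' : 1 ≤ k := by omega
  have hzero : ∀ x : Fin m → F, ∀ hx : x ≠ 0,
      u * fDH k α x + ∑ j, v j * x j = 0 → u' * fDH k α x + ∑ j, v' j * x j = 0 := by
    intro x hx h
    by_contra h'
    exact hsupp ⟨x, hx⟩ h' h
  obtain ⟨xc, hxc⟩ := Function.ne_iff.mp hc
  obtain ⟨xc', hxc'⟩ := Function.ne_iff.mp hc'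
  simp only [Pi.zero_apply] at hxc hxc'
  have hsum2 : ∀ (w x : Fin m → F), ∑ j, w j * (2 * x j) = 2 * ∑ j, w j * x j := by
    intro w x
    rw [Finset.mul_sum]
    exact Finset.sum_congr rfl (fun j _ => by ring)
  by_cases hu : u = 0
  · -- Case u = 0
    have hvne : ∃ i, v i ≠ 0 := by
      by_contra hv
      push_neg at hv
      apply hxc
      simp [hu, hv]
    obtain ⟨i, hvi⟩ := hvne
    have step1 : ∀ x : Fin m → F, x ≠ 0 → (∑ j, v j * x j) = 0 →
        (∑ j, v' j * x j) = 0 ∧ u' * fDH k α x = 0 := by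
      intro x hx hsum
      have hx0 : u * fDH k α x + ∑ j, v j * x j = 0 := by rw [hu, hsum]; ring
      have e1 := hzero x hx hx0
      have hx2 : (fun j => 2 * x j) ≠ 0 := by
        intro h
        apply hx
        funext j
        have := congrFun h j
        simp only [Pi.zero_apply, mul_eq_zero] at this
        exact this.resolve_left h2
      have hx20 : u * fDH k α (fun j => 2 * x j) + ∑ j, v j * (2 * x j) = 0 := by
        rw [hu, hsum2 v x, hsum]; ring
      have e2 := hzero _ hx2 hx20
      rw [fDH_two_smul _ _ _ h2, hsum2 v' x] at e2
      have hS : (∑ j, v' j * x j) = 0 := by linear_combination e2 - e1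
      exact ⟨hS, by linear_combination e1 - hS⟩
    -- u' = 0
    obtain ⟨j, hij⟩ := Fintype.exists_ne_of_one_lt_card (by simp; omega) i
    have hu' : u' = 0 := by
      by_cases hvj : v j = 0
      ·
        -- x0 = esgl j (v i)?? v·x0 = v j * v i = 0 ✓, weight 1
        have hx0 : esgl j (v i) ≠ 0 := esgl_ne_zero j hvi
        have hs : ∑ l, v l * esgl j (v i) l = 0 := by rw [sum_single, hvj]; ring
        have := (step1 _ hx0 hs).2
        rw [fDH_eval k α _ 1 (wt_single j (v i) hvi) hk1'] at this
        exact (mul_eq_zero.mp this).resolve_right (hα 1 le_rfl hk1')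
      · have hij' : i ≠ j := Ne.symm hij
        have hx0 : esgl i (-(v j)) + esgl j (v i) ≠ 0 := pair_ne_zero hij' _ hvi
        have hs : ∑ l, v l * (esgl i (-(v j)) + esgl j (v i)) l = 0 := by
          rw [sum_pair v hij']; ring
        have := (step1 _ hx0 hs).2
        rw [fDH_eval k α _ 2 (wt_pair hij' (neg_ne_zero.mpr hvj) hvi) hk1] at this
        exact (mul_eq_zero.mp this).resolve_right (hα 2 one_le_two hk1)
    -- v' = λ v
    set lam := v' i / v i with hlamdef
    have hv' : ∀ l, v' l = lam * v l := by
      intro l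
      by_cases hl : l = i
      · rw [hl, hlamdef, div_mul_cancel₀ _ hvi]
      · have hil : i ≠ l := Ne.symm hl
        have hx0 : esgl i (-(v l)) + esgl l (v i) ≠ 0 := pair_ne_zero hil _ hvi
        have hs : ∑ r, v r * (esgl i (-(v l)) + esgl l (v i)) r = 0 := by
          rw [sum_pair v hil]; ring
        have := (step1 _ hx0 hs).1
        rw [sum_pair v' hil] at this
        -- v' i * (-(v l)) + v' l * v i = 0
        rw [hlamdef]
        field_simp
        linear_combination this
    have hlam : lam ≠ 0 := by
      intro h
      apply hxc'
      rw [hu']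
      have : ∀ l, v' l = 0 := fun l => by rw [hv' l, h]; ring
      simp [this]
    refine ⟨lam, hlam, ?_⟩
    intro x
    have hS : (∑ l, v' l * x.val l) = lam * ∑ l, v l * x.val l := by
      rw [Finset.mul_sum]
      exact Finset.sum_congr rfl (fun l _ => by rw [hv' l]; ring)
    rw [hu, hu', hS]; ring
  · -- Case u ≠ 0
    set lam := u' / u with hlamdef
    set L : Fin m → F := fun j => v' j - lam * v j with hLdef
    have hu'lam : u' = lam * u := by rw [hlamdef]; field_simp
    have hL : ∀ x : Fin m → F, x ≠ 0 → u * fDH k α x + ∑ j, v j * x j = 0 →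
        ∑ j, L j * x j = 0 := by
      intro x hx h0
      have e := hzero x hx h0
      have expand : ∑ j, L j * x j
          = (∑ j, v' j * x j) - lam * ∑ j, v j * x j := by
        rw [Finset.mul_sum, ← Finset.sum_sub_distrib]
        exact Finset.sum_congr rfl (fun j _ => by rw [hLdef]; ring)
      rw [expand]
      linear_combination e - lam * h0 - (fDH k α x) * hu'lam
    have hLzero : ∀ i, L i = 0 := by
      by_cases hv : ∀ j, v j = 0
      · intro i
        have c1 : u * fDH k α (allo m F) + ∑ j, v j * allo m F j = 0 := by
          rw [fDH_eval_high _ _ _ (by rw [wt_allones]; omega)]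
          simp [hv]
        have c2 : u * fDH k α (aplus F i) + ∑ j, v j * aplus F i j = 0 := by
          rw [fDH_eval_high _ _ _ (by rw [wt_allones_plus i h2]; omega)]
          simp [hv]
        have e1 := hL _ (allo_ne_zero hmpos one_ne_zero) c1
        have e2 := hL _ (aplus_ne_zero i h2) c2
        rw [sum_allones] at e1
        rw [sum_aplus] at e2
        linear_combination e2 - e1
      · push_neg at hv
        obtain ⟨j0, hj0⟩ := hv
        have key : ∀ i, v i ≠ 0 → L i = 0 := by
          intro i hvi
          set t := -(u * α 1) / v i with htdef
          have ht : t ≠ 0 := by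
            rw [htdef, div_ne_zero_iff]
            exact ⟨neg_ne_zero.mpr (mul_ne_zero hu (hα 1 le_rfl hk1')), hvi⟩
          have c0 : u * fDH k α (esgl i t) + ∑ j, v j * esgl i t j = 0 := by
            rw [fDH_eval k α _ 1 (wt_single i t ht) hk1', sum_single, htdef]
            field_simp
            try ring
          have := hL _ (esgl_ne_zero i ht) c0
          rw [sum_single] at this
          exact (mul_eq_zero.mp this).resolve_right ht
        intro i
        by_cases hvi : v i = 0
        · have hij : i ≠ j0 := by
            intro h
            rw [h] at hvi
            exact hj0 hvi
          set t := -(u * α 2) / v j0 with htdef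
          have ht : t ≠ 0 := by
            rw [htdef, div_ne_zero_iff]
            exact ⟨neg_ne_zero.mpr (mul_ne_zero hu (hα 2 one_le_two hk1)), hj0⟩
          have hx0 : esgl i (1:F) + esgl j0 t ≠ 0 := pair_ne_zero hij _ ht
          have c0 : u * fDH k α (esgl i (1:F) + esgl j0 t)
              + ∑ l, v l * (esgl i (1:F) + esgl j0 t) l = 0 := by
            rw [fDH_eval k α _ 2 (wt_pair hij one_ne_zero ht) hk1, sum_pair v hij, hvi, htdef]
            field_simp
            try ring
          have := hL _ hx0 c0
          rw [sum_pair L hij] at this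
          have hLj0 := key j0 hj0
          rw [hLj0] at this
          linear_combination this
        · exact key i hvi
    have hv' : ∀ j, v' j = lam * v j := by
      intro j
      have := hLzero j
      rw [hLdef] at this
      linear_combination this
    have hlam : lam ≠ 0 := by
      intro h
      apply hxc'
      have hu'0 : u' = 0 := by rw [hu'lam, h]; ring
      have : ∀ l, v' l = 0 := fun l => by rw [hv' l, h]; ring
      simp [hu'0, this]
    refine ⟨lam, hlam, ?_⟩
    intro x
    have hS : (∑ l, v' l * x.val l) = lam * ∑ l, v l * x.val l := by
      rw [Finset.mul_sum]
      exact Finset.sum_congr rfl (fun l _ => by rw [hv' l]; ring)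
    rw [hu'lam, hS]; ring
end
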